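/- Exterior L₁ integral for Laplace noise: Let d ∈ ℕ, d ≥ 1, λ > 0, R > 0, and let f(w) = (λ/2)^d exp(−λ‖w‖₁) be the density of d i.i.d. Laplace(0, 1/λ) components. Then ∫_{{w ∈ ℝ^d : ‖w‖₁ > R}} sup_{x: ‖x‖₁ ≤ R} f(w − x) dw = ∑_{i=0}^{d−1} (λR)^i / i!. -/

import Mathlib

open MeasureTheory
open scoped BigOperators

namespace ExtLap

open Real Set

lemma integrable_comp_abs' {f : ℝ → ℝ} (hf : IntegrableOn f (Ioi 0)) :
    Integrable fun x : ℝ => f |x| := by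
  have hIoi : IntegrableOn (fun x : ℝ => f |x|) (Ioi 0) := by
    refine hf.congr_fun (fun x hx => ?_) measurableSet_Ioi
    rw [abs_of_pos hx]
  have hIic : IntegrableOn (fun x : ℝ => f |x|) (Iic 0) := by
    rw [← Measure.map_neg_eq_self (volume : Measure ℝ)]
    have m : MeasurableEmbedding fun x : ℝ => -x := (Homeomorph.neg ℝ).measurableEmbedding
    rw [m.integrableOn_map_iff]
    simp_rw [Function.comp_def, abs_neg, neg_preimage, neg_Iic, neg_zero]
    exact Iff.mpr integrableOn_Ici_iff_integrableOn_Ioi hIoi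
  have := hIic.union hIoi
  rwa [Iic_union_Ioi, integrableOn_univ] at this

variable {lam : ℝ}

lemma exp_abs_integrable (hlam : 0 < lam) :
    Integrable fun t : ℝ => Real.exp (-lam * |t|) :=
  integrable_comp_abs' (f := fun t => Real.exp (-lam * t))
    (by simpa [neg_mul] using exp_neg_integrableOn_Ioi 0 hlam)

lemma tail_int (hlam : 0 < lam) (c : ℝ) :
    ∫ t in Ioi c, lam * Real.exp (-lam * t) = Real.exp (-(lam * c)) := by
  have h := integral_comp_mul_left_Ioi (fun u => Real.exp (-u)) c hlam
  simp only [integral_exp_neg_Ioi, smul_eq_mul] at h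
  rw [MeasureTheory.integral_const_mul]
  simp only [neg_mul] at h ⊢
  rw [h]
  field_simp

lemma tail_half (hlam : 0 < lam) (c : ℝ) :
    ∫ t in Ioi c, lam / 2 * Real.exp (-lam * t) = Real.exp (-(lam * c)) / 2 := by
  have h := tail_int hlam c
  rw [MeasureTheory.integral_const_mul] at h ⊢
  rw [div_mul_eq_mul_div, h]

noncomputable def F (lam : ℝ) (d : ℕ) (R : ℝ) : ℝ :=
  if R ≤ 0 then 1
  else Real.exp (-(lam * R)) * ∑ i ∈ Finset.range d, (lam * R) ^ i / (i.factorial : ℝ)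

lemma F_nonneg (hlam : 0 < lam) (d : ℕ) (R : ℝ) : 0 ≤ F lam d R := by
  unfold F
  split_ifs with h
  · norm_num
  · push_neg at h
    refine mul_nonneg (Real.exp_nonneg _) (Finset.sum_nonneg fun i _ => ?_)
    positivity

lemma F_le_one (hlam : 0 < lam) (d : ℕ) (R : ℝ) : F lam d R ≤ 1 := by
  unfold F
  split_ifs with h
  · exact le_rfl
  · push_neg at h
    have h1 : ∑ i ∈ Finset.range d, (lam * R) ^ i / (i.factorial : ℝ) ≤ Real.exp (lam * R) :=
      Real.sum_le_exp_of_nonneg (by positivity) d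
    calc Real.exp (-(lam * R)) * ∑ i ∈ Finset.range d, (lam * R) ^ i / (i.factorial : ℝ)
        ≤ Real.exp (-(lam * R)) * Real.exp (lam * R) :=
          mul_le_mul_of_nonneg_left h1 (Real.exp_nonneg _)
      _ = 1 := by rw [← Real.exp_add]; simp

lemma measurable_F (lam : ℝ) (d : ℕ) : Measurable (F lam d) := by
  unfold F
  refine Measurable.ite measurableSet_Iic measurable_const ?_
  have : Continuous fun R : ℝ =>
      Real.exp (-(lam * R)) * ∑ i ∈ Finset.range d, (lam * R) ^ i / (i.factorial : ℝ) := by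
    refine Continuous.mul (Real.continuous_exp.comp (continuous_const.mul continuous_id).neg) ?_
    exact continuous_finset_sum _ fun i _ =>
      ((continuous_const.mul continuous_id).pow i).div_const _
  exact this.measurable

lemma F_of_nonpos (d : ℕ) {R : ℝ} (h : R ≤ 0) : F lam d R = 1 := if_pos h

lemma sum_zero_pow {d : ℕ} (hd : 1 ≤ d) :
    ∑ i ∈ Finset.range d, (0 : ℝ) ^ i / (i.factorial : ℝ) = 1 := by
  rw [Finset.sum_eq_single 0]
  · norm_num
  · intro i _ hi
    rw [zero_pow hi, zero_div]
  · intro h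
    exact absurd (Finset.mem_range.mpr hd) h

lemma F_of_nonneg {d : ℕ} (hd : 1 ≤ d) {R : ℝ} (h : 0 ≤ R) :
    F lam d R
      = Real.exp (-(lam * R)) * ∑ i ∈ Finset.range d, (lam * R) ^ i / (i.factorial : ℝ) := by
  unfold F
  split_ifs with h'
  · have hR0 : R = 0 := le_antisymm h' h
    subst hR0
    rw [mul_zero]
    simp [sum_zero_pow hd]
  · rfl

noncomputable def g (lam : ℝ) (d : ℕ) (R : ℝ) (w : Fin d → ℝ) : ℝ :=
  if R < ∑ i, |w i| then (lam / 2) ^ d * Real.exp (-lam * ∑ i, |w i|) else 0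

lemma measurable_sumabs (d : ℕ) : Measurable fun w : Fin d → ℝ => ∑ i, |w i| :=
  Finset.measurable_sum _ fun i _ => (measurable_pi_apply i).abs

lemma measurable_g (lam : ℝ) (d : ℕ) (R : ℝ) : Measurable (g lam d R) := by
  unfold g
  refine Measurable.ite (measurableSet_lt measurable_const (measurable_sumabs d)) ?_
    measurable_const
  exact measurable_const.mul (Real.measurable_exp.comp ((measurable_sumabs d).const_mul (-lam)))

lemma integrable_g (hlam : 0 < lam) (d : ℕ) (R : ℝ) : Integrable (g lam d R) := by
  have hprod : Integrable (fun w : Fin d → ℝ => ∏ i, Real.exp (-lam * |w i|)) :=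
    Integrable.fintype_prod fun _ => exp_abs_integrable hlam
  refine (hprod.const_mul ((lam / 2) ^ d)).mono' (measurable_g lam d R).aestronglyMeasurable ?_
  filter_upwards with w
  have hprodeq : ∏ i, Real.exp (-lam * |w i|) = Real.exp (-lam * ∑ i, |w i|) := by
    rw [← Real.exp_sum, Finset.mul_sum]
  rw [hprodeq]
  unfold g
  split_ifs with h
  · rw [Real.norm_eq_abs, abs_of_nonneg (by positivity)]
  · simp only [norm_zero]
    positivity

lemma g_integral_one (hlam : 0 < lam) (R : ℝ) :
    ∫ w : Fin 1 → ℝ, g lam 1 R w = F lam 1 R := by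
  have hmp := (volume_preserving_funUnique (Fin 1) ℝ).symm
  have h1 : ∫ w : Fin 1 → ℝ, g lam 1 R w = ∫ t : ℝ, g lam 1 R (fun _ => t) := by
    exact (hmp.integral_comp' (g lam 1 R)).symm
  have h2 : ∀ t : ℝ, g lam 1 R (fun _ => t)
      = (fun s : ℝ => if R < s then lam / 2 * Real.exp (-lam * s) else 0) |t| := by
    intro t
    simp [g, Fin.sum_univ_one]
  rw [h1]
  simp_rw [h2]
  rw [integral_comp_abs (f := fun s : ℝ => if R < s then lam / 2 * Real.exp (-lam * s) else 0)]
  rcases le_or_gt R 0 with hR | hR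
  · rw [setIntegral_congr_fun measurableSet_Ioi
      (g := fun s => lam / 2 * Real.exp (-lam * s)) (fun s hs => if_pos (lt_of_le_of_lt hR hs)),
      tail_half hlam 0]
    simp [F, hR]
  · have hind : ∀ s : ℝ, (if R < s then lam / 2 * Real.exp (-lam * s) else 0)
        = Set.indicator (Ioi R) (fun s => lam / 2 * Real.exp (-lam * s)) s := by
      intro s; rw [Set.indicator_apply]; rfl
    simp_rw [hind]
    rw [setIntegral_indicator measurableSet_Ioi, Ioi_inter_Ioi, max_eq_right hR.le,
      tail_half hlam R]
    rw [F, if_neg (not_le.mpr hR)]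
    simp [mul_div_assoc]
    ring

lemma outer (hlam : 0 < lam) {d : ℕ} (hd : 1 ≤ d) (R : ℝ) :
    ∫ t : ℝ, lam / 2 * Real.exp (-lam * |t|) * F lam d (R - |t|) = F lam (d + 1) R := by
  rw [show (fun t : ℝ => lam / 2 * Real.exp (-lam * |t|) * F lam d (R - |t|))
      = fun t : ℝ => (fun s : ℝ => lam / 2 * Real.exp (-lam * s) * F lam d (R - s)) |t| from rfl,
    integral_comp_abs (f := fun s : ℝ => lam / 2 * Real.exp (-lam * s) * F lam d (R - s))]
  rcases le_or_gt R 0 with hR | hR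
  · rw [setIntegral_congr_fun measurableSet_Ioi
      (g := fun s => lam / 2 * Real.exp (-lam * s))
      (fun s hs => by rw [F_of_nonpos d (by simp only [mem_Ioi] at hs; linarith), mul_one]),
      tail_half hlam 0]
    rw [F_of_nonpos (d+1) hR]
    norm_num
  · have hφm : Measurable fun s : ℝ => lam / 2 * Real.exp (-lam * s) * F lam d (R - s) := by
      exact (measurable_const.mul (Real.measurable_exp.comp (measurable_id.const_mul (-lam)))).mul
        ((measurable_F lam d).comp (measurable_const.sub measurable_id))
    have hbase : IntegrableOn (fun s : ℝ => lam / 2 * Real.exp (-lam * s)) (Ioi 0) := by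
      have := exp_neg_integrableOn_Ioi 0 hlam
      simpa [neg_mul, IntegrableOn] using this.const_mul (lam / 2)
    have hφint : IntegrableOn (fun s : ℝ => lam / 2 * Real.exp (-lam * s) * F lam d (R - s))
        (Ioi 0) := by
      refine hbase.mono' hφm.aestronglyMeasurable ?_
      filter_upwards with s
      have h1 : (0:ℝ) < lam / 2 * Real.exp (-lam * s) := by positivity
      rw [norm_mul, Real.norm_eq_abs, Real.norm_eq_abs, abs_of_pos h1,
        abs_of_nonneg (F_nonneg hlam d _)]
      exact mul_le_of_le_one_right h1.le (F_le_one hlam d _)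
    rw [show Ioi (0:ℝ) = Ioc 0 R ∪ Ioi R from (Ioc_union_Ioi_eq_Ioi hR.le).symm,
      setIntegral_union (Ioc_disjoint_Ioi le_rfl) measurableSet_Ioi
        (hφint.mono_set Ioc_subset_Ioi_self) (hφint.mono_set (Ioi_subset_Ioi hR.le))]
    have hfar : ∫ s in Ioi R, lam / 2 * Real.exp (-lam * s) * F lam d (R - s)
        = Real.exp (-(lam * R)) / 2 := by
      rw [setIntegral_congr_fun measurableSet_Ioi
        (g := fun s => lam / 2 * Real.exp (-lam * s))
        (fun s hs => by rw [F_of_nonpos d (by simp only [mem_Ioi] at hs; linarith), mul_one]),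
        tail_half hlam R]
    have hnear : ∫ s in Ioc 0 R, lam / 2 * Real.exp (-lam * s) * F lam d (R - s)
        = lam / 2 * Real.exp (-(lam * R))
          * ∑ i ∈ Finset.range d, lam ^ i / (i.factorial : ℝ) * (R ^ (i+1) / (i+1)) := by
      have heq : EqOn (fun s : ℝ => lam / 2 * Real.exp (-lam * s) * F lam d (R - s))
          (fun s : ℝ => lam / 2 * Real.exp (-(lam * R))
            * ∑ i ∈ Finset.range d, (lam * (R - s)) ^ i / (i.factorial : ℝ)) (Ioc 0 R) := by
        intro s hs
        have h0 : 0 ≤ R - s := by linarith [hs.2]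
        simp only
        rw [F_of_nonneg hd h0]
        have hexp : Real.exp (-lam * s) * Real.exp (-(lam * (R - s)))
            = Real.exp (-(lam * R)) := by
          rw [← Real.exp_add]; congr 1; ring
        calc lam / 2 * Real.exp (-lam * s)
              * (Real.exp (-(lam * (R - s)))
                * ∑ i ∈ Finset.range d, (lam * (R-s)) ^ i / (i.factorial : ℝ))
            = lam / 2 * (Real.exp (-lam * s) * Real.exp (-(lam * (R - s))))
              * ∑ i ∈ Finset.range d, (lam * (R-s)) ^ i / (i.factorial : ℝ) := by ring
          _ = _ := by rw [hexp]
      rw [setIntegral_congr_fun measurableSet_Ioc heq,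
        ← intervalIntegral.integral_of_le hR.le,
        intervalIntegral.integral_const_mul]
      congr 1
      rw [intervalIntegral.integral_finset_sum (fun i _ => by
        apply Continuous.intervalIntegrable
        exact ((continuous_const.mul (continuous_const.sub continuous_id)).pow i).div_const _)]
      refine Finset.sum_congr rfl fun i _ => ?_
      have hpow : ∀ s : ℝ, (lam * (R - s)) ^ i / (i.factorial : ℝ)
          = lam ^ i / (i.factorial : ℝ) * (R - s) ^ i := by
        intro s; rw [mul_pow]; ring
      simp_rw [hpow]
      rw [intervalIntegral.integral_const_mul]
      congr 1
      have := intervalIntegral.integral_comp_sub_left (a := (0:ℝ)) (b := R)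
        (fun u : ℝ => u ^ i) R
      simp only [sub_self, sub_zero] at this
      rw [this, integral_pow]
      ring
    rw [hnear, hfar, F_of_nonneg (Nat.le_succ_of_le hd) hR.le, Finset.sum_range_succ']
    have hterm : ∀ i : ℕ, (lam * R) ^ (i + 1) / ((i+1).factorial : ℝ)
        = lam * (lam ^ i / (i.factorial : ℝ) * (R ^ (i+1) / (i+1))) := by
      intro i
      rw [Nat.factorial_succ, mul_pow]
      have h1 : (i.factorial : ℝ) ≠ 0 := Nat.cast_ne_zero.mpr i.factorial_ne_zero
      have h2 : ((i:ℝ) + 1) ≠ 0 := by positivity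
      push_cast
      field_simp
      ring
    simp_rw [hterm]
    rw [← Finset.mul_sum]
    simp only [pow_zero, Nat.factorial_zero, Nat.cast_one]
    ring

lemma g_integral (hlam : 0 < lam) (d : ℕ) (hd : 1 ≤ d) (R : ℝ) :
    ∫ w : Fin d → ℝ, g lam d R w = F lam d R := by
  induction d, hd using Nat.le_induction generalizing R with
  | base => exact g_integral_one hlam R
  | succ d hd IH =>
    set e := MeasurableEquiv.piFinSuccAbove (fun _ : Fin (d+1) => ℝ) 0 with he
    have hmp := (volume_preserving_piFinSuccAbove (fun _ : Fin (d+1) => ℝ) 0).symm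
    have h1 : ∫ w : Fin (d+1) → ℝ, g lam (d+1) R w
        = ∫ p : ℝ × (Fin d → ℝ), g lam (d+1) R (e.symm p) := (hmp.integral_comp' _).symm
    have hsum : ∀ p : ℝ × (Fin d → ℝ),
        ∑ i, |e.symm p i| = |p.1| + ∑ j, |p.2 j| := by
      intro p
      rw [he]
      simp only [MeasurableEquiv.piFinSuccAbove_symm_apply, Fin.insertNthEquiv,
        Equiv.coe_fn_mk]
      rw [Fin.sum_univ_succAbove (fun i => |Fin.insertNth 0 p.1 p.2 i|) 0]
      simp [Fin.insertNth_apply_same, Fin.insertNth_apply_succAbove]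
    have hsplit : ∀ p : ℝ × (Fin d → ℝ), g lam (d+1) R (e.symm p)
        = (lam / 2 * Real.exp (-lam * |p.1|)) * g lam d (R - |p.1|) p.2 := by
      intro p
      simp only [g]
      rw [hsum p]
      by_cases h : R - |p.1| < ∑ j, |p.2 j|
      · rw [if_pos (by linarith), if_pos h, pow_succ,
          show -lam * (|p.1| + ∑ j, |p.2 j|) = -lam * |p.1| + -lam * ∑ j, |p.2 j| by ring,
          Real.exp_add]
        ring
      · push_neg at h
        rw [if_neg (by push_neg; linarith), if_neg (not_lt.mpr h), mul_zero]
    have hInt : Integrable (fun p : ℝ × (Fin d → ℝ) => g lam (d+1) R (e.symm p)) := by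
      have h := integrable_g hlam (d+1) R
      exact (hmp.integrable_comp_emb (MeasurableEquiv.measurableEmbedding _)).mpr h
    rw [h1]
    rw [Measure.volume_eq_prod] at hInt ⊢
    rw [MeasureTheory.integral_prod _ hInt]
    have hin : ∀ t : ℝ, (∫ y : Fin d → ℝ, g lam (d+1) R (e.symm (t, y)))
        = lam / 2 * Real.exp (-lam * |t|) * F lam d (R - |t|) := by
      intro t
      simp_rw [hsplit]
      rw [MeasureTheory.integral_const_mul, IH]
    simp_rw [hin]
    exact outer hlam hd R

lemma sup_eq (d : ℕ) (lam R : ℝ) (hlam : 0 < lam) (hR : 0 < R)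
    (f : (Fin d → ℝ) → ℝ)
    (hf : ∀ w, f w = (lam / 2) ^ d * Real.exp (-lam * ∑ i, |w i|))
    (w : Fin d → ℝ) (hw : R < ∑ i, |w i|) :
    (⨆ x ∈ {x : Fin d → ℝ | ∑ i, |x i| ≤ R}, f (w - x))
      = (lam / 2) ^ d * Real.exp (-lam * ((∑ i, |w i|) - R)) := by
  set S := ∑ i, |w i| with hS
  have hS0 : 0 < S := lt_trans hR hw
  set M := (lam / 2) ^ d * Real.exp (-lam * (S - R)) with hM
  have hM0 : 0 ≤ M := by positivity
  have hub : ∀ x : Fin d → ℝ,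
      (⨆ _ : x ∈ {x : Fin d → ℝ | ∑ i, |x i| ≤ R}, f (w - x)) ≤ M := by
    intro x
    by_cases hx : x ∈ {x : Fin d → ℝ | ∑ i, |x i| ≤ R}
    · rw [ciSup_pos hx]
      rw [hf]
      refine mul_le_mul_of_nonneg_left ?_ (by positivity)
      rw [Real.exp_le_exp]
      have hkey : S - R ≤ ∑ i, |(w - x) i| := by
        have h1 : ∑ i, (|w i| - |x i|) ≤ ∑ i, |(w - x) i| := by
          refine Finset.sum_le_sum fun i _ => ?_
          simpa [Pi.sub_apply] using abs_sub_abs_le_abs_sub (w i) (x i)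
        rw [Finset.sum_sub_distrib] at h1
        have h2 : ∑ i, |x i| ≤ R := hx
        linarith
      nlinarith [hlam.le]
    · haveI : IsEmpty (x ∈ {x : Fin d → ℝ | ∑ i, |x i| ≤ R}) := ⟨fun h => hx h⟩
      rw [Real.iSup_of_isEmpty]
      exact hM0
  have hbdd : BddAbove (Set.range fun x : Fin d → ℝ =>
      ⨆ _ : x ∈ {x : Fin d → ℝ | ∑ i, |x i| ≤ R}, f (w - x)) := by
    refine ⟨M, ?_⟩
    rintro _ ⟨x, rfl⟩
    exact hub x
  set x₀ : Fin d → ℝ := fun i => R / S * w i with hx₀def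
  have hx₀ : x₀ ∈ {x : Fin d → ℝ | ∑ i, |x i| ≤ R} := by
    have : ∑ i, |x₀ i| = R := by
      simp only [hx₀def, abs_mul, abs_of_nonneg (div_nonneg hR.le hS0.le)]
      rw [← Finset.mul_sum, ← hS, div_mul_cancel₀ _ hS0.ne']
    simp only [mem_setOf_eq, this, le_refl]
  have hval : f (w - x₀) = M := by
    rw [hf, hM]
    congr 2
    have h1 : ∀ i, (w - x₀) i = (1 - R / S) * w i := by
      intro i; simp only [Pi.sub_apply, hx₀def]; ring
    have h2 : (0:ℝ) ≤ 1 - R / S := by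
      rw [sub_nonneg, div_le_one hS0]
      exact hw.le
    simp only [h1, abs_mul, abs_of_nonneg h2]
    rw [← Finset.mul_sum, ← hS]
    field_simp
  refine le_antisymm (ciSup_le hub) ?_
  refine le_ciSup_of_le hbdd x₀ ?_
  rw [ciSup_pos hx₀]
  exact hval.symm.le

end ExtLap

open ExtLap in
/-- Exterior `L₁` integral for Laplace noise:
`∫_{‖w‖₁ > R} sup_{‖x‖₁ ≤ R} f(w - x) dw = ∑_{i=0}^{d-1} (λR)^i / i!`,
where `f(w) = (λ/2)^d exp(-λ‖w‖₁)` is the density of `d` i.i.d. Laplace components. -/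
theorem exterior_l1_integral_laplace
    (d : ℕ) (hd : 1 ≤ d) (lam R : ℝ) (hlam : 0 < lam) (hR : 0 < R)
    (f : (Fin d → ℝ) → ℝ)
    (hf : ∀ w, f w = (lam / 2) ^ d * Real.exp (-lam * ∑ i, |w i|)) :
    (∫ w in {w : Fin d → ℝ | R < ∑ i, |w i|},
        ⨆ x ∈ {x : Fin d → ℝ | ∑ i, |x i| ≤ R}, f (w - x))
      = ∑ i ∈ Finset.range d, (lam * R) ^ i / (i.factorial : ℝ) := by
  have hset : MeasurableSet {w : Fin d → ℝ | R < ∑ i, |w i|} :=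
    measurableSet_lt measurable_const (measurable_sumabs d)
  have hsup : ∀ w ∈ {w : Fin d → ℝ | R < ∑ i, |w i|},
      (⨆ x ∈ {x : Fin d → ℝ | ∑ i, |x i| ≤ R}, f (w - x))
        = Real.exp (lam * R) * ((lam / 2) ^ d * Real.exp (-lam * ∑ i, |w i|)) := by
    intro w hw
    rw [sup_eq d lam R hlam hR f hf w hw]
    rw [show -lam * ((∑ i, |w i|) - R) = lam * R + -lam * ∑ i, |w i| by ring, Real.exp_add]
    ring
  rw [MeasureTheory.setIntegral_congr_fun hset hsup, MeasureTheory.integral_const_mul]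
  have hg : ∫ w in {w : Fin d → ℝ | R < ∑ i, |w i|},
      (lam / 2) ^ d * Real.exp (-lam * ∑ i, |w i|) = ∫ w : Fin d → ℝ, g lam d R w := by
    rw [← MeasureTheory.integral_indicator hset]
    congr 1
  rw [hg, g_integral hlam d hd R, ExtLap.F, if_neg (not_le.mpr (by positivity : (0:ℝ) < R)),
    ← mul_assoc, ← Real.exp_add]
  simp
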